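/- Let n ≥ 2, let a = (a_1,…,a_{n−1}) and b = (b_1,…,b_{n−1}) be tuples of integers, and let x ∈ ℤ. Then Σ'_{l_1=a_1..b_1} Σ'_{l_2=a_2..b_2} ⋯ Σ'_{l_{n−1}=a_{n−1}..b_{n−1}} sgt(l_1,…,l_{n−1}) = Σ_{ε ∈ {0,1}^{n−1}} (−1)^{ε_1+⋯+ε_{n−1}} · sgt(m_1,…,m_{n−1},x), where m_i = a_i if ε_i = 0 and m_i = b_i + 1 if ε_i = 1. -/

import Mathlib

/-- The signed sum `Σ'_{l=a..b} f(l)`: the ordinary sum over `[a,b]` when `a ≤ b`,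
and `-Σ_{l=b+1}^{a-1} f(l)` when `a > b`. -/
noncomputable def ssum (a b : ℤ) (f : ℤ → ℤ) : ℤ :=
  if a ≤ b then ∑ l ∈ Finset.Icc a b, f l else -∑ l ∈ Finset.Icc (b + 1) (a - 1), f l

/-- Iterated signed sum over the box `[a 0, b 0] × ⋯ × [a (m-1), b (m-1)]`,
one signed sum per coordinate. -/
noncomputable def sbox : (m : ℕ) → (Fin m → ℤ) → (Fin m → ℤ) → ((Fin m → ℤ) → ℤ) → ℤ
  | 0, _, _, f => f Fin.elim0
  | m + 1, a, b, f =>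
      ssum (a 0) (b 0) fun l =>
        sbox m (fun i => a i.succ) (fun i => b i.succ) fun t => f (Fin.cons l t)

/-- The signed Gelfand–Tsetlin count: `sgt k = 1` for tuples of length `≤ 1`, and
`sgt (k_1,…,k_n) = Σ'_{l_1=k_1..k_2} ⋯ Σ'_{l_{n-1}=k_{n-1}..k_n} sgt (l_1,…,l_{n-1})`. -/
noncomputable def sgt : (n : ℕ) → (Fin n → ℤ) → ℤ
  | 0, _ => 1
  | 1, _ => 1
  | n + 2, k => sbox (n + 1) (fun i => k i.castSucc) (fun i => k i.succ) (sgt (n + 1))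



lemma icc_insert_left (a b : ℤ) (h : a ≤ b) :
    Finset.Icc a b = insert a (Finset.Icc (a + 1) b) := by
  ext y; simp only [Finset.mem_Icc, Finset.mem_insert]; omega

lemma ssum_head (a b : ℤ) (f : ℤ → ℤ) : ssum a b f = f a + ssum (a + 1) b f := by
  unfold ssum
  by_cases h : a ≤ b
  · rw [if_pos h, icc_insert_left a b h, Finset.sum_insert (by simp)]
    by_cases h2 : a + 1 ≤ b
    · rw [if_pos h2]
    · have : a = b := by omega
      subst this
      rw [if_neg h2]
      have : Finset.Icc (a + 1) (a + 1 - 1) = ∅ := by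
        apply Finset.Icc_eq_empty; omega
      simp [this]
  · rw [if_neg h, if_neg (by omega)]
    have h3 : b + 1 ≤ a := by omega
    have : Finset.Icc (b+1) a = insert a (Finset.Icc (b+1) (a-1)) := by
      ext y; simp only [Finset.mem_Icc, Finset.mem_insert]; omega
    rw [show a + 1 - 1 = a by ring, this, Finset.sum_insert (by simp)]
    ring

lemma telescope_helper (F : ℤ → ℤ) (k : ℕ) (c : ℤ) :
    ∑ l ∈ Finset.Icc c (c + k), (F l - F (l + 1)) = F c - F (c + k + 1) := by
  induction k with
  | zero => simp
  | succ k ih =>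
    have : Finset.Icc c (c + (k+1 : ℕ)) = insert (c + k + 1) (Finset.Icc c (c + k)) := by
      ext y; simp only [Finset.mem_Icc, Finset.mem_insert]; push_cast; omega
    rw [this, Finset.sum_insert (by simp)]
    rw [ih]
    push_cast
    ring_nf

lemma ssum_telescope (F : ℤ → ℤ) (a b : ℤ) :
    ssum a b (fun l => F l - F (l + 1)) = F a - F (b + 1) := by
  unfold ssum
  by_cases h : a ≤ b
  · rw [if_pos h]
    have hb : b = a + ((b - a).toNat : ℤ) := by omega
    rw [hb, telescope_helper]
  · rw [if_neg h]
    by_cases h2 : a = b + 1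
    · subst h2
      have : Finset.Icc (b + 1) (b + 1 - 1) = ∅ := Finset.Icc_eq_empty (by omega)
      simp [this]
    · have ha : a - 1 = (b + 1) + ((a - 1 - (b+1)).toNat : ℤ) := by omega
      rw [ha, telescope_helper]
      have : b + 1 + ((a - 1 - (b + 1)).toNat : ℤ) + 1 = a := by omega
      rw [this]; ring

lemma ssum_sum {ι : Type*} (s : Finset ι) (a b : ℤ) (g : ι → ℤ → ℤ) :
    ssum a b (fun l => ∑ i ∈ s, g i l) = ∑ i ∈ s, ssum a b (g i) := by
  unfold ssum
  split
  · exact Finset.sum_comm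
  · rw [Finset.sum_comm]
    rw [← Finset.sum_neg_distrib]

lemma ssum_const_mul (a b c : ℤ) (g : ℤ → ℤ) :
    ssum a b (fun l => c * g l) = c * ssum a b g := by
  unfold ssum
  split
  · rw [Finset.mul_sum]
  · rw [mul_neg, Finset.mul_sum]

def shiftx {m : ℕ} (c : Fin m → ℤ) (x : ℤ) : Fin m → ℤ := fun i => (Fin.snoc c x : Fin (m+1) → ℤ) i.succ

def Anti : (m : ℕ) → ((Fin m → ℤ) → ℤ) → ((Fin m → ℤ) → ℤ) → Prop
  | 0, f, G => G Fin.elim0 = f Fin.elim0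
  | m + 1, f, G => ∀ l : ℤ, Anti m (fun t => f (Fin.cons l t))
      (fun c => G (Fin.cons l c) - G (Fin.cons (l + 1) c))

lemma shiftx_cons {m : ℕ} (l : ℤ) (c : Fin m → ℤ) (x : ℤ) :
    shiftx (Fin.cons l c) x = Fin.snoc c x := by
  funext i
  simp [shiftx, ← Fin.cons_snoc_eq_snoc_cons]

lemma anti_sbox (m : ℕ) : ∀ (x : ℤ) (f : (Fin m → ℤ) → ℤ),
    Anti m f (fun c => sbox m c (shiftx c x) f) := by
  induction m with
  | zero => intro x f; simp [Anti, sbox]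
  | succ m ih =>
    intro x f l
    have key : (fun c : Fin m → ℤ => sbox (m+1) (Fin.cons l c) (shiftx (Fin.cons l c) x) f
        - sbox (m+1) (Fin.cons (l+1) c) (shiftx (Fin.cons (l+1) c) x) f)
        = fun c => sbox m c (shiftx c x) (fun t => f (Fin.cons l t)) := by
      funext c
      rw [shiftx_cons, shiftx_cons]
      simp only [sbox, Fin.cons_zero, Fin.cons_succ]
      rw [ssum_head l ((Fin.snoc c x : Fin (m+1) → ℤ) 0)]
      rw [add_sub_cancel_right]
      rfl
    show Anti m (fun t => f (Fin.cons l t)) _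
    rw [show (fun c : Fin m → ℤ => (fun c => sbox (m+1) c (shiftx c x) f) (Fin.cons l c)
          - (fun c => sbox (m+1) c (shiftx c x) f) (Fin.cons (l+1) c)) = _ from key]
    exact ih x (fun t => f (Fin.cons l t))

lemma sbox_eq_corners_gen (m : ℕ) : ∀ (a b : Fin m → ℤ) (f G : (Fin m → ℤ) → ℤ), Anti m f G →
    sbox m a b f = ∑ ε : Fin m → Bool,
      (-1 : ℤ) ^ (Finset.univ.filter fun i => ε i = true).card *
        G (fun i => if ε i then b i + 1 else a i) := by
  induction m with
  | zero =>
    intro a b f G h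
    simp only [Anti] at h
    rw [Fintype.sum_subsingleton _ (fun i : Fin 0 => false)]
    simp only [sbox, Finset.filter_congr_decidable]
    rw [show (Finset.univ : Finset (Fin 0)).filter (fun i => false = true) = ∅ by simp]
    rw [show (fun i : Fin 0 => if false then b i + 1 else a i) = Fin.elim0 from
      funext fun i => i.elim0]
    simp [h]
  | succ m ih =>
    intro a b f G h
    simp only [sbox]
    have step1 : (fun l => sbox m (fun i => a i.succ) (fun i => b i.succ)
          (fun t => f (Fin.cons l t)))
        = fun l => ∑ ε : Fin m → Bool,
            (-1 : ℤ) ^ (Finset.univ.filter fun i => ε i = true).card *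
              (G (Fin.cons l (fun i => if ε i then b i.succ + 1 else a i.succ))
                - G (Fin.cons (l + 1) (fun i => if ε i then b i.succ + 1 else a i.succ))) :=
      funext fun l => ih _ _ _ _ (h l)
    rw [step1, ssum_sum]
    have step2 : ∀ ε : Fin m → Bool,
        ssum (a 0) (b 0) (fun l =>
          (-1 : ℤ) ^ (Finset.univ.filter fun i => ε i = true).card *
            (G (Fin.cons l (fun i => if ε i then b i.succ + 1 else a i.succ))
              - G (Fin.cons (l + 1) (fun i => if ε i then b i.succ + 1 else a i.succ))))
        = (-1 : ℤ) ^ (Finset.univ.filter fun i => ε i = true).card *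
            (G (Fin.cons (a 0) (fun i => if ε i then b i.succ + 1 else a i.succ))
              - G (Fin.cons (b 0 + 1) (fun i => if ε i then b i.succ + 1 else a i.succ))) := by
      intro ε
      rw [ssum_const_mul,
        ssum_telescope (fun l => G (Fin.cons l (fun i => if ε i then b i.succ + 1 else a i.succ)))]
    rw [Finset.sum_congr rfl (fun ε _ => step2 ε)]
    -- reindex RHS
    rw [← (Fin.consEquiv (fun _ : Fin (m+1) => Bool)).sum_comp]
    rw [Fintype.sum_prod_type]
    rw [Finset.sum_comm]
    apply Finset.sum_congr rfl
    intro ε _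
    rw [Fintype.sum_bool]
    have hcard : ∀ v : Bool, ((Finset.univ.filter fun i => (Fin.cons v ε : Fin (m+1) → Bool) i = true).card : ℕ)
        = (if v then 1 else 0) + (Finset.univ.filter fun i => ε i = true).card := by
      intro v
      rw [Finset.card_filter, Finset.card_filter, Fin.sum_univ_succ]
      simp [Fin.cons_zero, Fin.cons_succ]
    have hcorner : ∀ v : Bool, (fun i : Fin (m+1) => if (Fin.cons v ε : Fin (m+1) → Bool) i then b i + 1 else a i)
        = Fin.cons (if v then b 0 + 1 else a 0)
            (fun i => if ε i then b i.succ + 1 else a i.succ) := by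
      intro v
      funext i
      refine Fin.cases ?_ ?_ i <;> simp
    simp only [show ∀ v : Bool, ((Fin.consEquiv fun _ : Fin (m+1) => Bool) (v, ε))
        = (Fin.cons v ε : Fin (m+1) → Bool) from fun v => rfl]
    rw [hcard true, hcard false, hcorner true, hcorner false]
    norm_num [pow_add]
    ring

/-- For every `n ≥ 2`, the iterated signed sum of `sgt` over the box
`[a_1,b_1] × ⋯ × [a_{n-1},b_{n-1}]` equals the signed sum over the `2^{n-1}` corners
`m` (with `m_i = a_i` or `m_i = b_i + 1`) of `sgt (m_1,…,m_{n-1},x)`. -/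
theorem sbox_sgt_corners (n : ℕ) (a b : Fin (n + 1) → ℤ) (x : ℤ) :
    sbox (n + 1) a b (sgt (n + 1)) =
      ∑ ε : Fin (n + 1) → Bool,
        (-1 : ℤ) ^ (Finset.univ.filter fun i => ε i = true).card *
          sgt (n + 2) (Fin.snoc (fun i => if ε i then b i + 1 else a i) x) := by
  have hG : (fun c : Fin (n+1) → ℤ => sgt (n+2) (Fin.snoc c x))
      = fun c => sbox (n+1) c (shiftx c x) (sgt (n+1)) := by
    funext c
    simp only [sgt]
    congr 1
    funext i
    exact Fin.snoc_castSucc _ _ _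
  have hA : Anti (n+1) (sgt (n+1)) (fun c : Fin (n+1) → ℤ => sgt (n+2) (Fin.snoc c x)) := by
    rw [hG]; exact anti_sbox (n+1) x (sgt (n+1))
  exact sbox_eq_corners_gen (n+1) a b (sgt (n+1)) _ hA
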